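/- Let ρ be a two-qubit state with Bloch decomposition coefficients T_{ij}, and define δ^x_min(ρ) = (1 − √(Σⱼ T₁ⱼ²))/2 and δ^y_min(ρ) = (1 − √(Σⱼ T₂ⱼ²))/2. Then the geometric discord D_g(ρ) = ‖ρ‖² − max over χ obtained by rank-one projective measurements on the first qubit of ‖χ‖² satisfies D_g(ρ) ≤ (1/2 − δ^x_min(ρ))² + (1/2 − δ^y_min(ρ))². -/

import Mathlib

open Matrix Kronecker Complex
open scoped ComplexOrder

noncomputable section

abbrev M2 := Matrix (Fin 2) (Fin 2) ℂ
abbrev M4 := Matrix (Fin 2 × Fin 2) (Fin 2 × Fin 2) ℂ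

/-- Pauli matrices -/
def σ1 : M2 := !![0, 1; 1, 0]
def σ2 : M2 := !![0, -Complex.I; Complex.I, 0]
def σ3 : M2 := !![1, 0; 0, -1]
def σ : Fin 3 → M2 := ![σ1, σ2, σ3]

/-- computational basis kets of one qubit -/
def up : Fin 2 → ℂ := ![1, 0]
def dn : Fin 2 → ℂ := ![0, 1]

/-- the pure state |Ω(γ)⟩ = cos(π/4-γ/2)|↑↑⟩ + sin(π/4-γ/2)|↓↓⟩ as a vector -/
def Ωvec (γ : ℝ) : Fin 2 × Fin 2 → ℂ := fun p =>
  (Real.cos (Real.pi/4 - γ/2) : ℂ) * (up p.1 * up p.2)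
  + (Real.sin (Real.pi/4 - γ/2) : ℂ) * (dn p.1 * dn p.2)

/-- the rank-one projector |v⟩⟨v| -/
def proj (v : Fin 2 × Fin 2 → ℂ) : M4 :=
  Matrix.vecMulVec v (fun p => (starRingEnd ℂ) (v p))

/-- the density operator of |Ω(γ)⟩ -/
def Ωstate (γ : ℝ) : M4 := proj (Ωvec γ)

/-- the Bell states -/
def Φp : Fin 2 × Fin 2 → ℂ := fun p => ((up p.1 * up p.2) + (dn p.1 * dn p.2)) / (Real.sqrt 2 : ℂ)
def Φm : Fin 2 × Fin 2 → ℂ := fun p => ((up p.1 * up p.2) - (dn p.1 * dn p.2)) / (Real.sqrt 2 : ℂ)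
def Ψp : Fin 2 × Fin 2 → ℂ := fun p => ((up p.1 * dn p.2) + (dn p.1 * up p.2)) / (Real.sqrt 2 : ℂ)
def Ψm : Fin 2 × Fin 2 → ℂ := fun p => ((up p.1 * dn p.2) - (dn p.1 * up p.2)) / (Real.sqrt 2 : ℂ)

/-- the Werner state in Bloch form -/
def ρW (F : ℝ) : M4 :=
  (1/4 : ℂ) • ((1 : M4) + (((4*F-1)/3 : ℝ) : ℂ) • (σ1 ⊗ₖ σ1 - σ2 ⊗ₖ σ2 + σ3 ⊗ₖ σ3))

/-- σ·n for a direction n ∈ ℝ³ -/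
def pdot (n : Fin 3 → ℝ) : M2 := ∑ i, ((n i : ℂ)) • σ i

/-- correlation function ⟨A ⊗ B⟩ in the state ρ -/
def corr (ρ : M4) (A B : M2) : ℝ := (Matrix.trace (ρ * (A ⊗ₖ B))).re

/-- squared Hilbert-Schmidt norm -/
def hs2 (A : M4) : ℝ := (Matrix.trace (A * Aᴴ)).re

/-- the post-measurement (classical-quantum) state after a projective
measurement {P, 1-P} on the first qubit -/
def postMeas (P : M2) (ρ : M4) : M4 :=
  (P ⊗ₖ (1 : M2)) * ρ * (P ⊗ₖ (1 : M2))
  + (((1 : M2) - P) ⊗ₖ (1 : M2)) * ρ * (((1 : M2) - P) ⊗ₖ (1 : M2))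

/-- geometric discord: minimal squared Hilbert-Schmidt distance of ρ to the
classical-quantum states obtained by rank-one projective measurements on qubit 1 -/
def Dg (ρ : M4) : ℝ :=
  sInf {r : ℝ | ∃ P : M2, P.IsHermitian ∧ P * P = P ∧ P.trace = 1 ∧
    r = hs2 (ρ - postMeas P ρ)}

/-- minimal error rate of the key in the general EPR protocol -/
def δmin (ρ : M4) : ℝ :=
  1/2 - (1/4) * (sSup {r : ℝ | ∃ n : Fin 3 → ℝ, (∑ i, n i ^ 2) = 1 ∧ r = corr ρ σ1 (pdot n)}
    + sSup {r : ℝ | ∃ n : Fin 3 → ℝ, (∑ i, n i ^ 2) = 1 ∧ r = corr ρ σ2 (pdot n)})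


/-- auxiliary lemmas for the proof of STATEMENT 9 -/
lemma aux_hs2_nonneg (A : M4) : 0 ≤ hs2 A := by
  simp only [hs2, Matrix.trace, Matrix.diag_apply, Matrix.mul_apply,
    Matrix.conjTranspose_apply, Complex.re_sum]
  apply Finset.sum_nonneg; intro i _
  apply Finset.sum_nonneg; intro j _
  rw [show star (A i j) = (starRingEnd ℂ) (A i j) from rfl, Complex.mul_conj]
  simpa using Complex.normSq_nonneg _

lemma aux_kron_conjT (A B : M2) : (A ⊗ₖ B)ᴴ = Aᴴ ⊗ₖ Bᴴ := by
  ext ⟨i,j⟩ ⟨k,l⟩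
  simp [Matrix.conjTranspose_apply, Matrix.kroneckerMap_apply]

lemma aux_key (P : M2) (hPH : P.IsHermitian) (hP2 : P * P = P) (ρ : M4) (hH : ρ.IsHermitian) :
    hs2 (postMeas P ρ) ≤ hs2 ρ := by
  set Q : M2 := 1 - P with hQ
  set A : M4 := P ⊗ₖ (1 : M2) with hA
  set B : M4 := Q ⊗ₖ (1 : M2) with hB
  have hQ2 : Q * Q = Q := by
    have : Q * Q = 1 - P - P + P * P := by rw [hQ]; noncomm_ring
    rw [this, hP2, hQ]; abel
  have hPQ : P * Q = 0 := by
    have : P * Q = P - P * P := by rw [hQ]; noncomm_ring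
    rw [this, hP2]; abel
  have hQP : Q * P = 0 := by
    have : Q * P = P - P * P := by rw [hQ]; noncomm_ring
    rw [this, hP2]; abel
  have hA2 : A * A = A := by rw [hA, ← Matrix.mul_kronecker_mul, hP2, one_mul]
  have hB2 : B * B = B := by rw [hB, ← Matrix.mul_kronecker_mul, hQ2, one_mul]
  have hAB : A * B = 0 := by
    rw [hA, hB, ← Matrix.mul_kronecker_mul, hPQ, one_mul, Matrix.zero_kronecker]
  have hBA : B * A = 0 := by
    rw [hA, hB, ← Matrix.mul_kronecker_mul, hQP, one_mul, Matrix.zero_kronecker]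
  have hAH : Aᴴ = A := by
    rw [hA, aux_kron_conjT, hPH.eq, Matrix.conjTranspose_one]
  have hBH : Bᴴ = B := by
    have : Q.IsHermitian := (Matrix.isHermitian_one).sub hPH
    rw [hB, aux_kron_conjT, this.eq, Matrix.conjTranspose_one]
  set χ : M4 := postMeas P ρ with hχ
  have hχdef : χ = A * ρ * A + B * ρ * B := rfl
  have hχH : χᴴ = χ := by
    rw [hχdef]
    simp [Matrix.conjTranspose_add, Matrix.conjTranspose_mul, hAH, hBH, hH.eq, Matrix.mul_assoc]
  have hcross1 : (A*ρ*A) * (B*ρ*B) = 0 := by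
    have : (A*ρ*A) * (B*ρ*B) = A*ρ*(A*B)*ρ*B := by noncomm_ring
    rw [this, hAB]; noncomm_ring
  have hcross2 : (B*ρ*B) * (A*ρ*A) = 0 := by
    have : (B*ρ*B) * (A*ρ*A) = B*ρ*(B*A)*ρ*A := by noncomm_ring
    rw [this, hBA]; noncomm_ring
  have hsq1 : (A*ρ*A) * (A*ρ*A) = A*ρ*A*ρ*A := by
    have : (A*ρ*A) * (A*ρ*A) = A*ρ*(A*A)*ρ*A := by noncomm_ring
    rw [this, hA2]
  have hsq2 : (B*ρ*B) * (B*ρ*B) = B*ρ*B*ρ*B := by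
    have : (B*ρ*B) * (B*ρ*B) = B*ρ*(B*B)*ρ*B := by noncomm_ring
    rw [this, hB2]
  have t1 : Matrix.trace (A*ρ*A*ρ*A) = Matrix.trace ((A*ρ*A)*ρ) := by
    rw [Matrix.trace_mul_comm]
    congr 1
    have : A*(A*ρ*A*ρ) = (A*A)*ρ*A*ρ := by noncomm_ring
    rw [this, hA2]
  have t2 : Matrix.trace (B*ρ*B*ρ*B) = Matrix.trace ((B*ρ*B)*ρ) := by
    rw [Matrix.trace_mul_comm]
    congr 1
    have : B*(B*ρ*B*ρ) = (B*B)*ρ*B*ρ := by noncomm_ring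
    rw [this, hB2]
  have hχχ : Matrix.trace (χ * χ) = Matrix.trace (χ * ρ) := by
    rw [hχdef]
    rw [add_mul, mul_add, mul_add, hcross1, hcross2, hsq1, hsq2, add_mul]
    simp only [Matrix.trace_add, Matrix.trace_zero, add_zero, zero_add, t1, t2]
  have expand : (ρ - χ) * (ρ - χ) = ρ*ρ - ρ*χ - χ*ρ + χ*χ := by noncomm_ring
  have hdiff : hs2 ρ - hs2 χ = hs2 (ρ - χ) := by
    have hsub : (ρ - χ)ᴴ = ρ - χ := by rw [Matrix.conjTranspose_sub, hH.eq, hχH]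
    simp only [hs2, hsub, hχH, hH.eq, expand]
    simp only [Matrix.trace_add, Matrix.trace_sub, hχχ, Matrix.trace_mul_comm χ ρ]
    simp [Complex.sub_re, Complex.add_re]
  have := aux_hs2_nonneg (ρ - χ)
  linarith

lemma aux_hs2_bloch (a b : ℝ) (c : Fin 3 → Fin 3 → ℝ) :
    hs2 ((1/4 : ℂ) • ((1 : M4) + ((a : ℂ)) • (σ3 ⊗ₖ (1 : M2))
        + ((b : ℂ)) • ((1 : M2) ⊗ₖ σ3) + ∑ i, ∑ j, ((c i j : ℂ)) • (σ i ⊗ₖ σ j)))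
    = (1 + a^2 + b^2 + ∑ i, ∑ j, (c i j)^2)/4 := by
  simp only [hs2, Matrix.trace, Matrix.diag_apply, Matrix.mul_apply, Matrix.conjTranspose_apply,
    Fin.sum_univ_three, Fintype.sum_prod_type, Fin.sum_univ_two,
    Matrix.smul_apply, Matrix.add_apply, Matrix.one_apply, Matrix.kroneckerMap_apply,
    σ, σ1, σ2, σ3, Matrix.cons_val', Matrix.cons_val_zero, Matrix.cons_val_one,
    Matrix.head_cons, Matrix.head_fin_const, Matrix.empty_val', Matrix.cons_val_fin_one,
    Matrix.of_apply, smul_eq_mul, Prod.mk.injEq, ne_eq, Matrix.cons_val_two, Matrix.tail_cons]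
  norm_num [Complex.ext_iff, Complex.add_re, Complex.add_im, Complex.mul_re, Complex.mul_im]
  ring

def auxR : M2 := !![1,0;0,0]

lemma aux_pinch_kron (X Y : M2) :
    (auxR ⊗ₖ (1:M2)) * (X ⊗ₖ Y) * (auxR ⊗ₖ (1:M2))
    + (((1:M2) - auxR) ⊗ₖ (1:M2)) * (X ⊗ₖ Y) * (((1:M2) - auxR) ⊗ₖ (1:M2))
    = (auxR*X*auxR + ((1:M2)-auxR)*X*((1:M2)-auxR)) ⊗ₖ Y := by
  rw [← Matrix.mul_kronecker_mul, ← Matrix.mul_kronecker_mul,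
      ← Matrix.mul_kronecker_mul, ← Matrix.mul_kronecker_mul,
      ← Matrix.add_kronecker]
  simp

lemma aux_pinch1 : auxR*(1:M2)*auxR + ((1:M2)-auxR)*(1:M2)*((1:M2)-auxR) = (1:M2) := by
  ext i j; fin_cases i <;> fin_cases j <;>
    simp [auxR, Matrix.mul_apply, Fin.sum_univ_two, Matrix.one_apply, Matrix.sub_apply]

lemma aux_pinchσ : ∀ i : Fin 3, auxR*(σ i)*auxR + ((1:M2)-auxR)*(σ i)*((1:M2)-auxR)
    = if i = 2 then σ3 else 0 := by
  intro i; fin_cases i <;>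
  · ext k l; fin_cases k <;> fin_cases l <;>
      simp [auxR, σ, σ1, σ2, σ3, Matrix.mul_apply, Fin.sum_univ_two, Matrix.one_apply,
        Matrix.sub_apply]

lemma aux_postMeas_bloch (x3 y3 : ℝ) (T : Fin 3 → Fin 3 → ℝ) :
    postMeas auxR ((1/4 : ℂ) • ((1 : M4) + ((x3 : ℂ)) • (σ3 ⊗ₖ (1 : M2))
        + ((y3 : ℂ)) • ((1 : M2) ⊗ₖ σ3) + ∑ i, ∑ j, ((T i j : ℂ)) • (σ i ⊗ₖ σ j)))
    = (1/4 : ℂ) • ((1 : M4) + ((x3 : ℂ)) • (σ3 ⊗ₖ (1 : M2))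
        + ((y3 : ℂ)) • ((1 : M2) ⊗ₖ σ3)
        + ∑ i, ∑ j, (((if i = 2 then T i j else 0 : ℝ) : ℂ)) • (σ i ⊗ₖ σ j)) := by
  have h1 : (1 : M4) = (1:M2) ⊗ₖ (1:M2) := by simp
  rw [postMeas]
  simp only [Matrix.mul_smul, Matrix.smul_mul, ← smul_add]
  congr 1
  simp only [mul_add, add_mul, Finset.mul_sum, Finset.sum_mul, h1]
  rw [show ∀ (a b c d a' b' c' d' : M4), (a+b+c+d)+(a'+b'+c'+d') = (a+a')+(b+b')+(c+c')+(d+d')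
      from fun _ _ _ _ _ _ _ _ => by abel]
  rw [← Finset.sum_add_distrib]
  congr 1
  · congr 1
    · congr 1
      · rw [aux_pinch_kron]; rw [aux_pinch1]
      · simp only [Matrix.mul_smul, Matrix.smul_mul, ← smul_add, aux_pinch_kron]
        rw [show auxR*σ3*auxR + ((1:M2)-auxR)*σ3*((1:M2)-auxR)
              = if (2:Fin 3) = 2 then σ3 else 0 from aux_pinchσ 2]
        simp
    · simp only [Matrix.mul_smul, Matrix.smul_mul, ← smul_add, aux_pinch_kron, aux_pinch1]
  · apply Finset.sum_congr rfl
    intro i _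
    simp only [Finset.mul_sum, Finset.sum_mul, ← Finset.sum_add_distrib]
    apply Finset.sum_congr rfl
    intro j _
    simp only [Matrix.mul_smul, Matrix.smul_mul, ← smul_add, aux_pinch_kron, aux_pinchσ i]
    by_cases hi : i = 2 <;> simp [hi, show σ 2 = σ3 from rfl]

/-- the geometric discord is bounded by (1/2−δˣ)² + (1/2−δʸ)². -/
theorem geometric_discord_bound (x3 y3 : ℝ) (T : Fin 3 → Fin 3 → ℝ)
    (ρ : M4)
    (hρdef : ρ = (1/4 : ℂ) • ((1 : M4) + ((x3 : ℂ)) • (σ3 ⊗ₖ (1 : M2))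
        + ((y3 : ℂ)) • ((1 : M2) ⊗ₖ σ3) + ∑ i, ∑ j, ((T i j : ℂ)) • (σ i ⊗ₖ σ j)))
    (hρ : ρ.PosSemidef) :
    hs2 ρ - sSup {r : ℝ | ∃ P : M2, P.IsHermitian ∧ P * P = P ∧ P.trace = 1 ∧
        r = hs2 (postMeas P ρ)}
      ≤ (1/2 - (1 - Real.sqrt (∑ j, (T 0 j)^2))/2)^2
        + (1/2 - (1 - Real.sqrt (∑ j, (T 1 j)^2))/2)^2 := by
  -- abbreviations
  set S : Set ℝ := {r : ℝ | ∃ P : M2, P.IsHermitian ∧ P * P = P ∧ P.trace = 1 ∧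
        r = hs2 (postMeas P ρ)} with hS
  have hRH : auxR.IsHermitian := by
    show auxRᴴ = auxR
    ext i j; fin_cases i <;> fin_cases j <;> simp [auxR, Matrix.conjTranspose_apply]
  have hR2 : auxR * auxR = auxR := by
    ext i j; fin_cases i <;> fin_cases j <;> simp [auxR, Matrix.mul_apply, Fin.sum_univ_two]
  have hRtr : auxR.trace = 1 := by simp [auxR, Matrix.trace_fin_two]
  have hmem : hs2 (postMeas auxR ρ) ∈ S := ⟨auxR, hRH, hR2, hRtr, rfl⟩
  have hbdd : BddAbove S := by
    refine ⟨hs2 ρ, ?_⟩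
    rintro r ⟨P, hPH, hP2, -, rfl⟩
    exact aux_key P hPH hP2 ρ hρ.1
  have hle : hs2 (postMeas auxR ρ) ≤ sSup S := le_csSup hbdd hmem
  -- values of the two norms
  have hρval : hs2 ρ = (1 + x3^2 + y3^2 + ∑ i, ∑ j, (T i j)^2)/4 := by
    rw [hρdef]; exact aux_hs2_bloch x3 y3 T
  have hχval : hs2 (postMeas auxR ρ)
      = (1 + x3^2 + y3^2 + ∑ i, ∑ j, ((if i = 2 then T i j else 0 : ℝ))^2)/4 := by
    rw [hρdef, aux_postMeas_bloch]
    exact aux_hs2_bloch x3 y3 (fun i j => if i = 2 then T i j else 0)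
  have hsum : (∑ i, ∑ j, (T i j)^2) - (∑ i, ∑ j, ((if i = 2 then T i j else 0 : ℝ))^2)
      = (∑ j, (T 0 j)^2) + (∑ j, (T 1 j)^2) := by
    simp [Fin.sum_univ_three]
  -- simplify the right-hand side
  have h0 : (0:ℝ) ≤ ∑ j, (T 0 j)^2 := by positivity
  have h1 : (0:ℝ) ≤ ∑ j, (T 1 j)^2 := by positivity
  have hr0 : (1/2 - (1 - Real.sqrt (∑ j, (T 0 j)^2))/2)^2 = (∑ j, (T 0 j)^2)/4 := by
    have : 1/2 - (1 - Real.sqrt (∑ j, (T 0 j)^2))/2 = Real.sqrt (∑ j, (T 0 j)^2)/2 := by ring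
    rw [this, div_pow, Real.sq_sqrt h0]; norm_num
  have hr1 : (1/2 - (1 - Real.sqrt (∑ j, (T 1 j)^2))/2)^2 = (∑ j, (T 1 j)^2)/4 := by
    have : 1/2 - (1 - Real.sqrt (∑ j, (T 1 j)^2))/2 = Real.sqrt (∑ j, (T 1 j)^2)/2 := by ring
    rw [this, div_pow, Real.sq_sqrt h1]; norm_num
  rw [hr0, hr1]
  have : hs2 ρ - hs2 (postMeas auxR ρ)
      = (∑ j, (T 0 j)^2)/4 + (∑ j, (T 1 j)^2)/4 := by
    rw [hρval, hχval]; linarith [hsum]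
  linarith
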